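/- A conditional probability distribution P is a wiring-type operation if and only if P is a convex combination of deterministic wiring-type operations. Consequently, the set of wiring-type operations for fixed index data equals the convex hull of the finite set of deterministic operations, and each deterministic operation is an extreme point of this set; i.e., the free operations of a given type form a polytope whose vertices are precisely the deterministic operations of that type (a generalization of Fine's theorem). -/

import Mathlib

open Finset

/-- A conditional probability distribution `P` (on outputs `∀ i, A i` given settings
`∀ i, X i`) is a *wiring-type operation* if there exist a finite set `Λ` (modelled as a
`Finset ℕ`), a probability distribution `ρ` on `Λ`, and for each wing `i` and each
`l ∈ Λ` a conditional distribution `Q i x l` on `A i`, such that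
`P x a = Σ_{l ∈ Λ} ρ l * Π_i Q i (x i) l (a i)`. -/
def IsWiringOp {I : Type} [Fintype I] [DecidableEq I]
    (X A : I → Type) [∀ i, Fintype (X i)] [∀ i, Fintype (A i)]
    (P : (∀ i, X i) → (∀ i, A i) → ℝ) : Prop :=
  ∃ (Λ : Finset ℕ) (ρ : ℕ → ℝ) (Q : ∀ i, X i → ℕ → A i → ℝ),
    (∀ l ∈ Λ, 0 ≤ ρ l) ∧ (∑ l ∈ Λ, ρ l = 1) ∧
    (∀ i x l a, 0 ≤ Q i x l a) ∧ (∀ i x, ∀ l ∈ Λ, ∑ a : A i, Q i x l a = 1) ∧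
    (∀ x a, P x a = ∑ l ∈ Λ, ρ l * ∏ i, Q i (x i) l (a i))

/-- `P` is a deterministic (wiring-type) operation if there are functions
`f i : X i → A i` with `P x a = Π_i [a i = f i (x i)]`. -/
def IsDetOp {I : Type} [Fintype I] [DecidableEq I]
    (X A : I → Type) [∀ i, Fintype (X i)] [∀ i, Fintype (A i)] [∀ i, DecidableEq (A i)]
    (P : (∀ i, X i) → (∀ i, A i) → ℝ) : Prop :=
  ∃ f : ∀ i, X i → A i, ∀ x a, P x a = ∏ i, (if a i = f i (x i) then (1 : ℝ) else 0)

/- ---------------------------------------------------------------------------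
Auxiliary lemmas
--------------------------------------------------------------------------- -/

lemma sum_pi_prod {ι : Type*} [Fintype ι] [DecidableEq ι] {β : ι → Type*} [∀ i, Fintype (β i)]
    (h : ∀ i, β i → ℝ) : ∑ g : ∀ i, β i, ∏ i, h i (g i) = ∏ i, ∑ b, h i b := by
  rw [Finset.prod_univ_sum, Fintype.piFinset_univ]

section Aux
variable {I : Type} [Fintype I] [DecidableEq I]
    {X A : I → Type} [∀ i, Fintype (X i)] [∀ i, Fintype (A i)]
    [∀ i, DecidableEq (X i)] [∀ i, DecidableEq (A i)]

lemma inner_fubini (x : ∀ i, X i) (a : ∀ i, A i) (R : ∀ i, X i → A i → ℝ)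
    (hR : ∀ i x', ∑ b, R i x' b = 1) :
    ∑ f : ∀ i, X i → A i, (∏ i, ∏ x', R i x' (f i x')) *
        (∏ i, if a i = f i (x i) then (1:ℝ) else 0) = ∏ i, R i (x i) (a i) := by
  simp_rw [← Finset.prod_mul_distrib]
  rw [sum_pi_prod (h := fun i (g : X i → A i) =>
    (∏ x', R i x' (g x')) * (if a i = g (x i) then (1:ℝ) else 0))]
  refine Finset.prod_congr rfl fun i _ => ?_
  have key : ∀ g : X i → A i, (∏ x', R i x' (g x')) * (if a i = g (x i) then (1:ℝ) else 0)
      = ∏ x', (R i x' (g x') * if x' = x i then (if a i = g x' then (1:ℝ) else 0) else 1) := by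
    intro g
    rw [Finset.prod_mul_distrib,
      Finset.prod_ite_eq' univ (x i) (fun x' => if a i = g x' then (1:ℝ) else 0)]
    simp
  simp_rw [key]
  rw [sum_pi_prod (h := fun x' b =>
    R i x' b * if x' = x i then (if a i = b then (1:ℝ) else 0) else 1)]
  have h2 : ∀ x', (∑ b, R i x' b * if x' = x i then (if a i = b then (1:ℝ) else 0) else 1)
      = if x' = x i then R i (x i) (a i) else 1 := by
    intro x'
    by_cases h : x' = x i
    · subst h
      simp [mul_ite, mul_one, mul_zero, Finset.sum_ite_eq]
    · simp [h, hR i x']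
  simp_rw [h2]
  rw [Finset.prod_ite_eq' univ (x i) (fun _ => R i (x i) (a i))]
  simp

lemma key_back (P : (∀ i, X i) → (∀ i, A i) → ℝ) (n : ℕ) (e : (∀ i, X i → A i) ≃ Fin n)
    (w : (∀ i, X i → A i) → ℝ) (hw0 : ∀ f, 0 ≤ w f) (hw1 : ∑ f, w f = 1)
    (hP : ∀ x a, P x a = ∑ f, w f * ∏ i, (if a i = f i (x i) then (1:ℝ) else 0)) :
    IsWiringOp X A P := by
  refine ⟨Finset.range n,
    fun l => if h : l < n then w (e.symm ⟨l, h⟩) else 0,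
    fun i x l a => if h : l < n then (if a = (e.symm ⟨l, h⟩) i x then (1:ℝ) else 0) else 0,
    ?_, ?_, ?_, ?_, ?_⟩
  · intro l hl
    rw [Finset.mem_range] at hl
    simp only [dif_pos hl]
    exact hw0 _
  · rw [← Fin.sum_univ_eq_sum_range (fun l => if h : l < n then w (e.symm ⟨l, h⟩) else 0) n,
      ← hw1, ← Equiv.sum_comp e.symm w]
    refine Finset.sum_congr rfl fun j _ => ?_
    simp [j.isLt]
  · intro i x l a
    by_cases h : l < n
    · simp only [dif_pos h]
      split <;> norm_num
    · simp [dif_neg h]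
  · intro i x l hl
    rw [Finset.mem_range] at hl
    simp only [dif_pos hl]
    simp [Finset.sum_ite_eq']
  · intro x a
    rw [hP x a,
      ← Fin.sum_univ_eq_sum_range (fun l => (if h : l < n then w (e.symm ⟨l, h⟩) else 0) *
        ∏ i, (if h : l < n then (if a i = (e.symm ⟨l, h⟩) i (x i) then (1:ℝ) else 0) else 0)) n,
      ← Equiv.sum_comp e.symm (fun f => w f * ∏ i, (if a i = f i (x i) then (1:ℝ) else 0))]
    refine Finset.sum_congr rfl fun j _ => ?_
    simp [j.isLt]

/-- Key characterization: `P` is a wiring operation iff it is a convex combination of the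
canonical deterministic operations indexed by `f : ∀ i, X i → A i`. -/
lemma key_char (P : (∀ i, X i) → (∀ i, A i) → ℝ) :
    IsWiringOp X A P ↔ ∃ w : (∀ i, X i → A i) → ℝ,
      (∀ f, 0 ≤ w f) ∧ (∑ f, w f = 1) ∧
      (∀ x a, P x a = ∑ f, w f * ∏ i, (if a i = f i (x i) then (1:ℝ) else 0)) := by
  constructor
  · rintro ⟨Λ, ρ, Qc, hρ0, hρ1, hQ0, hQ1, hP⟩
    refine ⟨fun f => ∑ l ∈ Λ, ρ l * ∏ i, ∏ x', Qc i x' l (f i x'), ?_, ?_, ?_⟩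
    · intro f
      refine Finset.sum_nonneg fun l hl => mul_nonneg (hρ0 l hl) ?_
      exact Finset.prod_nonneg fun i _ => Finset.prod_nonneg fun x' _ => hQ0 i x' l (f i x')
    · rw [Finset.sum_comm]
      rw [show (1:ℝ) = ∑ l ∈ Λ, ρ l from hρ1.symm]
      refine Finset.sum_congr rfl fun l hl => ?_
      rw [← Finset.mul_sum]
      have h1 : ∑ f : ∀ i, X i → A i, ∏ i, ∏ x', Qc i x' l (f i x')
          = ∏ i, ∑ g : X i → A i, ∏ x', Qc i x' l (g x') :=
        sum_pi_prod (h := fun i (g : X i → A i) => ∏ x', Qc i x' l (g x'))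
      rw [h1]
      have h2 : ∀ i, (∑ g : X i → A i, ∏ x', Qc i x' l (g x')) = 1 := by
        intro i
        rw [sum_pi_prod (h := fun x' b => Qc i x' l b)]
        exact Finset.prod_eq_one fun x' _ => hQ1 i x' l hl
      simp [h2]
    · intro x a
      rw [hP x a]
      simp_rw [Finset.sum_mul, mul_assoc]
      rw [Finset.sum_comm]
      refine Finset.sum_congr rfl fun l hl => ?_
      rw [← Finset.mul_sum]
      congr 1
      exact (inner_fubini x a (fun i x' b => Qc i x' l b) (fun i x' => hQ1 i x' l hl)).symm
  · rintro ⟨w, hw0, hw1, hP⟩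
    exact key_back P (Fintype.card (∀ i, X i → A i)) (Fintype.equivFin _) w hw0 hw1 hP

lemma det_sum_one (f : ∀ i, X i → A i) (x : ∀ i, X i) :
    ∑ a : ∀ i, A i, ∏ i, (if a i = f i (x i) then (1:ℝ) else 0) = 1 := by
  rw [sum_pi_prod (h := fun i b => if b = f i (x i) then (1:ℝ) else 0)]
  refine Finset.prod_eq_one fun i _ => ?_
  simp [Finset.sum_ite_eq']

lemma wiring_norm {P : (∀ i, X i) → (∀ i, A i) → ℝ} (hP : IsWiringOp X A P) :
    (∀ x a, 0 ≤ P x a) ∧ (∀ x, ∑ a, P x a = 1) := by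
  obtain ⟨w, hw0, hw1, hPe⟩ := (key_char P).mp hP
  constructor
  · intro x a
    rw [hPe x a]
    refine Finset.sum_nonneg fun g _ => mul_nonneg (hw0 g) ?_
    exact Finset.prod_nonneg fun i _ => by split <;> norm_num
  · intro x
    simp_rw [hPe x]
    rw [Finset.sum_comm]
    refine (Finset.sum_congr rfl fun g _ => ?_).trans hw1
    rw [← Finset.mul_sum, det_sum_one g x, mul_one]

lemma det_unique (f : ∀ i, X i → A i) (P1 : (∀ i, X i) → (∀ i, A i) → ℝ)
    (h0 : ∀ x a, 0 ≤ P1 x a) (hs : ∀ x, ∑ a, P1 x a = 1)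
    (hz : ∀ x a, (∏ i, if a i = f i (x i) then (1:ℝ) else 0) = 0 → P1 x a = 0) :
    P1 = fun x a => ∏ i, (if a i = f i (x i) then (1:ℝ) else 0) := by
  funext x a
  by_cases h : a = fun i => f i (x i)
  · subst h
    have h1 : (∏ i, if (fun i => f i (x i)) i = f i (x i) then (1:ℝ) else 0) = 1 := by simp
    rw [h1]
    have h2 : ∑ a', P1 x a' = P1 x (fun i => f i (x i)) := by
      refine Finset.sum_eq_single_of_mem _ (mem_univ _) fun b _ hb => ?_
      obtain ⟨i, hi⟩ := Function.ne_iff.mp hb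
      exact hz x b (Finset.prod_eq_zero (mem_univ i) (if_neg hi))
    rw [← h2, hs x]
  · obtain ⟨i, hi⟩ := Function.ne_iff.mp h
    have hprod : (∏ i, if a i = f i (x i) then (1:ℝ) else 0) = 0 :=
      Finset.prod_eq_zero (mem_univ i) (if_neg hi)
    rw [hprod, hz x a hprod]

end Aux

/-- generalized Fine theorem: `P` is a wiring-type operation iff `P` is a
convex combination of deterministic wiring-type operations; the set of deterministic
operations is finite, so the wiring-type operations of a given type form a polytope
(the convex hull of the finite set of deterministic operations), and every deterministic
operation is an extreme point (vertex) of this polytope. -/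
theorem wiringOps_polytope_of_deterministic {I : Type} [Fintype I] [DecidableEq I]
    (X A : I → Type) [∀ i, Fintype (X i)] [∀ i, Fintype (A i)] [∀ i, DecidableEq (A i)] :
    (∀ P : (∀ i, X i) → (∀ i, A i) → ℝ,
        IsWiringOp X A P ↔ P ∈ convexHull ℝ {Q | IsDetOp X A Q}) ∧
    Set.Finite {Q | IsDetOp X A Q} ∧
    (∀ Q, IsDetOp X A Q → Q ∈ Set.extremePoints ℝ {P | IsWiringOp X A P}) := by
  classical
  haveI : ∀ i, DecidableEq (X i) := fun i => Classical.decEq _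
  -- the canonical deterministic operation attached to `f`
  set D : (∀ i, X i → A i) → ((∀ i, X i) → (∀ i, A i) → ℝ) :=
    fun f x a => ∏ i, (if a i = f i (x i) then (1:ℝ) else 0) with hD
  have hDdet : ∀ f, IsDetOp X A (D f) := fun f => ⟨f, fun x a => rfl⟩
  -- each deterministic operation is a wiring operation
  have det_wiring : ∀ Q, IsDetOp X A Q → IsWiringOp X A Q := by
    rintro Q ⟨f, hf⟩
    refine (key_char Q).mpr ⟨fun g => if g = f then 1 else 0, ?_, ?_, ?_⟩
    · intro g; by_cases h : g = f <;> simp [h]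
    · simp [Finset.sum_ite_eq']
    · intro x a
      rw [hf x a]
      simp [ite_mul, Finset.sum_ite_eq']
  -- the wiring operations form a convex set
  have hconv : Convex ℝ {P | IsWiringOp X A P} := by
    intro P1 h1 P2 h2 c d hc hd hcd
    obtain ⟨w1, hw10, hw11, hP1⟩ := (key_char P1).mp h1
    obtain ⟨w2, hw20, hw21, hP2⟩ := (key_char P2).mp h2
    refine (key_char _).mpr ⟨fun g => c * w1 g + d * w2 g, ?_, ?_, ?_⟩
    · intro g
      exact add_nonneg (mul_nonneg hc (hw10 g)) (mul_nonneg hd (hw20 g))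
    · rw [Finset.sum_add_distrib, ← Finset.mul_sum, ← Finset.mul_sum, hw11, hw21]
      simpa using hcd
    · intro x a
      have : (c • P1 + d • P2) x a = c * P1 x a + d * P2 x a := by
        simp [Pi.add_apply, Pi.smul_apply, smul_eq_mul]
      rw [this, hP1 x a, hP2 x a, Finset.mul_sum, Finset.mul_sum, ← Finset.sum_add_distrib]
      refine Finset.sum_congr rfl fun g _ => ?_
      ring
  -- first part: the iff
  have part1 : ∀ P : (∀ i, X i) → (∀ i, A i) → ℝ,
      IsWiringOp X A P ↔ P ∈ convexHull ℝ {Q | IsDetOp X A Q} := by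
    intro P
    constructor
    · intro hP
      obtain ⟨w, hw0, hw1, hPe⟩ := (key_char P).mp hP
      have hPeq : P = ∑ f, w f • D f := by
        funext x a
        rw [hPe x a]
        simp [Finset.sum_apply, Pi.smul_apply, smul_eq_mul, hD]
      rw [hPeq]
      exact (convex_convexHull ℝ _).sum_mem (fun f _ => hw0 f) hw1
        (fun f _ => subset_convexHull ℝ _ (hDdet f))
    · intro hP
      exact convexHull_min (fun Q hQ => det_wiring Q hQ) hconv hP
  refine ⟨part1, ?_, ?_⟩
  -- second part: finiteness
  · refine (Set.finite_range D).subset ?_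
    rintro Q ⟨f, hf⟩
    exact ⟨f, (funext fun x => funext fun a => (hf x a)).symm⟩
  -- third part: extreme points
  · rintro Q hQdet
    obtain ⟨f, hf⟩ := hQdet
    have hQD : Q = D f := funext fun x => funext fun a => hf x a
    refine ⟨det_wiring Q ⟨f, hf⟩, ?_⟩
    intro P1 h1 P2 h2 hseg
    obtain ⟨c, d, hc, hd, hcd, hsum⟩ := hseg
    have hpt : ∀ x a, c * P1 x a + d * P2 x a = Q x a := by
      intro x a
      have := congrFun (congrFun hsum x) a
      simpa [Pi.add_apply, Pi.smul_apply, smul_eq_mul] using this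
    obtain ⟨h1p, h1s⟩ := wiring_norm h1
    obtain ⟨h2p, h2s⟩ := wiring_norm h2
    have hz : ∀ x a, (∏ i, if a i = f i (x i) then (1:ℝ) else 0) = 0 →
        P1 x a = 0 ∧ P2 x a = 0 := by
      intro x a hprod
      have h0 : c * P1 x a + d * P2 x a = 0 := by rw [hpt x a, hf x a, hprod]
      have hn1 : 0 ≤ c * P1 x a := mul_nonneg hc.le (h1p x a)
      have hn2 : 0 ≤ d * P2 x a := mul_nonneg hd.le (h2p x a)
      constructor
      · have : c * P1 x a = 0 := by linarith
        exact (mul_eq_zero.mp this).resolve_left (ne_of_gt hc)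
      · have : d * P2 x a = 0 := by linarith
        exact (mul_eq_zero.mp this).resolve_left (ne_of_gt hd)
    have e1 : P1 = Q := by
      rw [hQD]
      exact det_unique f P1 h1p h1s (fun x a h => (hz x a h).1)
    have e2 : P2 = Q := by
      rw [hQD]
      exact det_unique f P2 h2p h2s (fun x a h => (hz x a h).2)
    exact e1
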